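/- For the sup-kernel operator A restricted to the cone Z = Y₊ of nonnegative bounded functions on M, one has ‖A‖_LIP = ‖A‖ = sup{k(s,t) : s, t ∈ M}, where ‖A‖ = sup{‖Af‖_∞/‖f‖_∞ : f ∈ Z, f ≠ 0} and ‖A‖_LIP = sup{‖Af − Ag‖_∞/‖f − g‖_∞ : f, g ∈ Z, f ≠ g}. -/
import Mathlib


/-- A real function on `M` is bounded. -/
def IsBddFun {M : Type*} (f : M → ℝ) : Prop := ∃ c : ℝ, ∀ t, |f t| ≤ c

/-- The sup-kernel operator `(Af)(s) = sup {k(s,t) f(t) : t ∈ M}`. -/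
noncomputable def supKernelOp {M : Type*} (k : M → M → ℝ) (f : M → ℝ) : M → ℝ :=
  fun s => ⨆ t, k s t * f t

/-- The supremum norm `‖f‖_∞ = sup {|f(t)| : t ∈ M}`. -/
noncomputable def supNorm {M : Type*} (f : M → ℝ) : ℝ := ⨆ t, |f t|

/-- For the sup-kernel operator `A` restricted to the cone `Z = Y₊` of nonnegative
bounded real functions on `M`, one has `‖A‖_LIP = ‖A‖ = sup {k(s,t) : s, t ∈ M}`, where
`‖A‖ = sup {‖Af‖_∞/‖f‖_∞ : f ∈ Z, f ≠ 0}` and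
`‖A‖_LIP = sup {‖Af - Ag‖_∞/‖f - g‖_∞ : f, g ∈ Z, f ≠ g}`. -/
theorem supKernelOp_lipschitz_seminorm_eq_norm_eq_sup_kernel
    {M : Type*} [Nonempty M]
    (k : M → M → ℝ)
    (hk_nonneg : ∀ s t, 0 ≤ k s t)
    (hk_bdd : ∃ K : ℝ, ∀ s t, k s t ≤ K) :
    sSup {r : ℝ | ∃ f g : M → ℝ, IsBddFun f ∧ (∀ t, 0 ≤ f t) ∧ IsBddFun g ∧ (∀ t, 0 ≤ g t) ∧
        f ≠ g ∧ r = supNorm (supKernelOp k f - supKernelOp k g) / supNorm (f - g)} =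
      (⨆ p : M × M, k p.1 p.2) ∧
    sSup {r : ℝ | ∃ f : M → ℝ, IsBddFun f ∧ (∀ t, 0 ≤ f t) ∧ f ≠ 0 ∧
        r = supNorm (supKernelOp k f) / supNorm f} =
      (⨆ p : M × M, k p.1 p.2) := by
  classical
  obtain ⟨K, hK⟩ := hk_bdd
  set t0 : M := Classical.arbitrary M with ht0
  set Ksup := ⨆ p : M × M, k p.1 p.2 with hKsupdef
  have hbddk : BddAbove (Set.range fun p : M × M => k p.1 p.2) :=
    ⟨K, by rintro x ⟨p, rfl⟩; exact hK p.1 p.2⟩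
  have hk_le : ∀ s t, k s t ≤ Ksup := fun s t => le_ciSup hbddk (s, t)
  have hKsup_nonneg : 0 ≤ Ksup := le_trans (hk_nonneg t0 t0) (hk_le t0 t0)
  -- boundedness of products
  have hbddA : ∀ (f : M → ℝ), IsBddFun f → ∀ s,
      BddAbove (Set.range fun t => k s t * f t) := by
    rintro f ⟨c, hc⟩ s
    refine ⟨K * c, ?_⟩
    rintro x ⟨t, rfl⟩
    calc k s t * f t ≤ k s t * |f t| :=
          mul_le_mul_of_nonneg_left (le_abs_self _) (hk_nonneg s t)
      _ ≤ K * c := mul_le_mul (hK s t) (hc t) (abs_nonneg _) (le_trans (hk_nonneg s t) (hK s t))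
  -- supNorm facts
  have hsn_ge : ∀ (f : M → ℝ), IsBddFun f → ∀ t, |f t| ≤ supNorm f := by
    rintro f ⟨c, hc⟩ t
    exact le_ciSup ⟨c, by rintro x ⟨u, rfl⟩; exact hc u⟩ t
  have hsn_nonneg : ∀ (f : M → ℝ), IsBddFun f → 0 ≤ supNorm f := fun f hf =>
    le_trans (abs_nonneg _) (hsn_ge f hf t0)
  have hsub_bdd : ∀ (f g : M → ℝ), IsBddFun f → IsBddFun g → IsBddFun (f - g) := by
    rintro f g ⟨c, hc⟩ ⟨d, hd⟩
    exact ⟨c + d, fun t => by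
      simpa using (abs_sub (f t) (g t)).trans (add_le_add (hc t) (hd t))⟩
  -- key one-sided estimate
  have key : ∀ f g : M → ℝ, IsBddFun f → IsBddFun g → ∀ s,
      supKernelOp k f s ≤ supKernelOp k g s + Ksup * supNorm (f - g) := by
    intro f g hf hg s
    refine ciSup_le fun t => ?_
    have h1 : k s t * f t = k s t * g t + k s t * (f t - g t) := by ring
    rw [h1]
    refine add_le_add (le_ciSup (hbddA g hg s) t) ?_
    calc k s t * (f t - g t) ≤ k s t * |f t - g t| :=
          mul_le_mul_of_nonneg_left (le_abs_self _) (hk_nonneg s t)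
      _ ≤ Ksup * supNorm (f - g) := by
          refine mul_le_mul (hk_le s t) ?_ (abs_nonneg _) hKsup_nonneg
          simpa using hsn_ge (f - g) (hsub_bdd f g hf hg) t
  have hsym : ∀ f g : M → ℝ, supNorm (g - f) = supNorm (f - g) := by
    intro f g
    unfold supNorm
    refine iSup_congr fun t => ?_
    simp [abs_sub_comm]
  have habs : ∀ f g : M → ℝ, IsBddFun f → IsBddFun g → ∀ s,
      |supKernelOp k f s - supKernelOp k g s| ≤ Ksup * supNorm (f - g) := by
    intro f g hf hg s
    rw [abs_sub_le_iff]
    constructor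
    · linarith [key f g hf hg s]
    · have := key g f hg hf s
      rw [hsym f g] at this
      linarith
  -- upper bound for lipschitz set elements
  have hAsub : ∀ f g : M → ℝ, IsBddFun f → IsBddFun g →
      supNorm (supKernelOp k f - supKernelOp k g) ≤ Ksup * supNorm (f - g) := by
    intro f g hf hg
    refine ciSup_le fun s => ?_
    simpa using habs f g hf hg s
  have hupper : ∀ r ∈ {r : ℝ | ∃ f g : M → ℝ, IsBddFun f ∧ (∀ t, 0 ≤ f t) ∧ IsBddFun g ∧
      (∀ t, 0 ≤ g t) ∧ f ≠ g ∧
      r = supNorm (supKernelOp k f - supKernelOp k g) / supNorm (f - g)}, r ≤ Ksup := by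
    rintro r ⟨f, g, hf, -, hg, -, hne, rfl⟩
    have hDpos : 0 < supNorm (f - g) := by
      obtain ⟨t, ht⟩ := Function.ne_iff.mp hne
      have h1 : 0 < |f t - g t| := abs_pos.mpr (sub_ne_zero.mpr ht)
      have h2 := hsn_ge (f - g) (hsub_bdd f g hf hg) t
      simp only [Pi.sub_apply] at h2
      linarith
    rw [div_le_iff₀ hDpos]
    exact hAsub f g hf hg
  -- A 0 = 0
  have hA0 : supKernelOp k 0 = 0 := by
    funext s
    simp [supKernelOp, ciSup_const]
  have h0bdd : IsBddFun (0 : M → ℝ) := ⟨0, by simp⟩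
  -- norm-set is contained in lip-set (via g = 0)
  have hupper2 : ∀ r ∈ {r : ℝ | ∃ f : M → ℝ, IsBddFun f ∧ (∀ t, 0 ≤ f t) ∧ f ≠ 0 ∧
      r = supNorm (supKernelOp k f) / supNorm f}, r ≤ Ksup := by
    rintro r ⟨f, hf, hfn, hne, rfl⟩
    have : supNorm (supKernelOp k f) / supNorm f =
        supNorm (supKernelOp k f - supKernelOp k 0) / supNorm (f - 0) := by
      rw [hA0, sub_zero, sub_zero]
    rw [this]
    exact hupper _ ⟨f, 0, hf, hfn, h0bdd, fun t => le_rfl, hne, rfl⟩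
  -- the witness f = 1
  set f1 : M → ℝ := fun _ => (1 : ℝ) with hf1def
  have hf1bdd : IsBddFun f1 := ⟨1, by simp [hf1def]⟩
  have hf1ne : f1 ≠ 0 := fun h => one_ne_zero (congrFun h t0)
  have hbddks : ∀ s, BddAbove (Set.range fun t => k s t) :=
    fun s => ⟨K, by rintro x ⟨t, rfl⟩; exact hK s t⟩
  have hAf1 : supKernelOp k f1 = fun s => ⨆ t, k s t := by
    funext s; simp [supKernelOp, hf1def]
  have hsnAf1 : supNorm (supKernelOp k f1) = Ksup := by
    rw [hAf1]
    unfold supNorm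
    have habs' : ∀ s, |⨆ t, k s t| = ⨆ t, k s t := fun s =>
      abs_of_nonneg (le_trans (hk_nonneg s t0) (le_ciSup (hbddks s) t0))
    have hcongr : (⨆ s, |⨆ t, k s t|) = ⨆ s, ⨆ t, k s t := iSup_congr habs'
    rw [hcongr]
    refine le_antisymm (ciSup_le fun s => ciSup_le fun t => hk_le s t) ?_
    refine ciSup_le fun p => ?_
    have h1 : k p.1 p.2 ≤ ⨆ t, k p.1 t := le_ciSup (hbddks p.1) p.2
    have h2 : (⨆ t, k p.1 t) ≤ ⨆ s, ⨆ t, k s t :=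
      le_ciSup ⟨K, by rintro x ⟨s, rfl⟩; exact ciSup_le fun t => hK s t⟩ p.1
    exact h1.trans h2
  have hsnf1 : supNorm f1 = 1 := by
    unfold supNorm
    simp [hf1def]
  have hmem2 : Ksup ∈ {r : ℝ | ∃ f : M → ℝ, IsBddFun f ∧ (∀ t, 0 ≤ f t) ∧ f ≠ 0 ∧
      r = supNorm (supKernelOp k f) / supNorm f} := by
    exact ⟨f1, hf1bdd, fun t => zero_le_one, hf1ne, by rw [hsnAf1, hsnf1, div_one]⟩
  have hmem1 : Ksup ∈ {r : ℝ | ∃ f g : M → ℝ, IsBddFun f ∧ (∀ t, 0 ≤ f t) ∧ IsBddFun g ∧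
      (∀ t, 0 ≤ g t) ∧ f ≠ g ∧
      r = supNorm (supKernelOp k f - supKernelOp k g) / supNorm (f - g)} := by
    refine ⟨f1, 0, hf1bdd, fun t => zero_le_one, h0bdd, fun t => le_rfl, hf1ne, ?_⟩
    rw [hA0, sub_zero, sub_zero, hsnAf1, hsnf1, div_one]
  constructor
  · exact le_antisymm (Real.sSup_le hupper hKsup_nonneg)
      (le_csSup ⟨Ksup, fun x hx => hupper x hx⟩ hmem1)
  · exact le_antisymm (Real.sSup_le hupper2 hKsup_nonneg)
      (le_csSup ⟨Ksup, fun x hx => hupper2 x hx⟩ hmem2)
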